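/- arXiv:1307.6893 — 2 statements merged into one kernel-verified Lean document; each statement's English description precedes it below -/
import Mathlib

section
/- Let α ∈ ℝ be badly approximable: there exists ε > 0 such that |α − p/q| > ε/q² for all integers p and all nonzero integers q. Then 0 is not an accumulation point of the values of the quadratic form Q(x₁,x₂) = x₁² − α²x₂² on ℤ²: there exists δ > 0 such that for all integers p, q with (p,q) ≠ (0,0), one has |p² − α²q²| ≥ δ. -/
/-- If `α` is badly approximable, then `0` is not an accumulation point of the values
of the quadratic form `Q(x₁,x₂) = x₁² - α²x₂²` at nonzero integer points. -/
theorem badly_approximable_quadratic_form_bounded_away (α : ℝ)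
    (hα : ∃ ε : ℝ, 0 < ε ∧ ∀ (p : ℤ) (q : ℤ), q ≠ 0 →
      ε / (q : ℝ) ^ 2 < |α - (p : ℝ) / (q : ℝ)|) :
    ∃ δ : ℝ, 0 < δ ∧ ∀ (p : ℤ) (q : ℤ), ¬(p = 0 ∧ q = 0) →
      δ ≤ |(p : ℝ) ^ 2 - α ^ 2 * (q : ℝ) ^ 2| := by
  obtain ⟨ε, hε, h⟩ := hα
  have hαε : ε < |α| := by
    have := h 0 1 one_ne_zero
    simpa using this
  refine ⟨min 1 (ε ^ 2), lt_min one_pos (by positivity), ?_⟩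
  intro p q hpq
  by_cases hq : q = 0
  · subst hq
    have hp : p ≠ 0 := fun h0 => hpq ⟨h0, rfl⟩
    have h1 : (1 : ℝ) ≤ |(p : ℝ)| := by exact_mod_cast Int.one_le_abs hp
    have h2 : (1 : ℝ) ≤ |(p : ℝ)| ^ 2 := by nlinarith
    calc min 1 (ε ^ 2) ≤ 1 := min_le_left _ _
      _ ≤ |(p : ℝ)| ^ 2 := h2
      _ = |(p : ℝ) ^ 2 - α ^ 2 * ((0 : ℤ) : ℝ) ^ 2| := by
          rw [← abs_pow]
          norm_num
  · have hq0 : ((q : ℝ)) ≠ 0 := Int.cast_ne_zero.mpr hq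
    have hqpos : (0 : ℝ) < |(q : ℝ)| := abs_pos.mpr hq0
    have key : ∀ r : ℤ, ε / |(q : ℝ)| < |(r : ℝ) - α * (q : ℝ)| := by
      intro r
      have h1 := h r q hq
      have harg : α - (r : ℝ) / (q : ℝ) = -(((r : ℝ) - α * (q : ℝ)) / (q : ℝ)) := by
        field_simp
        ring
      rw [harg, abs_neg, abs_div] at h1
      have h3 : ε / (q : ℝ) ^ 2 = (ε / |(q : ℝ)|) / |(q : ℝ)| := by
        rw [div_div, ← sq_abs]
        ring_nf
      rw [h3] at h1
      exact (div_lt_div_iff_of_pos_right hqpos).mp h1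
    set A := |(p : ℝ) - α * (q : ℝ)| with hA
    set B := |(-p : ℝ) - α * (q : ℝ)| with hB
    have hAb : ε / |(q : ℝ)| < A := key p
    have hBb : ε / |(q : ℝ)| < B := by
      have := key (-p)
      simpa using this
    have hsum : 2 * |α| * |(q : ℝ)| ≤ A + B := by
      have h1 : |((p : ℝ) - α * (q : ℝ)) + ((-p : ℝ) - α * (q : ℝ))| ≤ A + B := abs_add_le _ _
      have h2 : ((p : ℝ) - α * (q : ℝ)) + ((-p : ℝ) - α * (q : ℝ)) = -(2 * α * (q : ℝ)) := by
        ring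
      rw [h2, abs_neg, abs_mul, abs_mul] at h1
      simpa using h1
    set c : ℝ := ε / |(q : ℝ)| with hc
    have hc0 : 0 < c := div_pos hε hqpos
    have hcq : c * |(q : ℝ)| = ε := div_mul_cancel₀ ε (ne_of_gt hqpos)
    have hA0 : 0 < A := lt_trans hc0 hAb
    have hB0 : 0 < B := lt_trans hc0 hBb
    have hprod : ε ^ 2 ≤ A * B := by
      have h6 : 2 * ε * |(q : ℝ)| ≤ A + B := by nlinarith
      have t1 : c * B < A * B := mul_lt_mul_of_pos_right hAb hB0
      have t2 : c * A < A * B := by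
        calc c * A = A * c := mul_comm _ _
          _ < A * B := mul_lt_mul_of_pos_left hBb hA0
      have t3 : c * (2 * ε * |(q : ℝ)|) ≤ c * (A + B) :=
        mul_le_mul_of_nonneg_left h6 hc0.le
      nlinarith
    calc min 1 (ε ^ 2) ≤ ε ^ 2 := min_le_right _ _
      _ ≤ A * B := hprod
      _ = |((p : ℝ) - α * q) * ((-p : ℝ) - α * q)| := by rw [hA, hB, abs_mul]
      _ = |(p : ℝ) ^ 2 - α ^ 2 * (q : ℝ) ^ 2| := by
          rw [← abs_neg]; congr 1; ring
end

section
/- Let g, u ∈ SL(n,ℝ), and suppose that g^{−k} u g^{k} → I (the identity matrix) as k → +∞ along the integers. Then u is unipotent: the matrix u − I is nilpotent, i.e., (u − I)ⁿ = 0. -/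
open Matrix MatrixGroups Filter Topology

noncomputable instance {n : ℕ} : TopologicalSpace (Matrix.SpecialLinearGroup (Fin n) ℝ) :=
  instTopologicalSpaceSubtype

lemma my_scalar_eq_smul_one {n : ℕ} (t : ℝ) :
    Matrix.scalar (Fin n) t = t • (1 : Matrix (Fin n) (Fin n) ℝ) := by
  ext i j
  simp [Matrix.scalar_apply, Matrix.diagonal_apply, Matrix.one_apply]

lemma my_eval_charpoly {n : ℕ} (M : Matrix (Fin n) (Fin n) ℝ) (r : ℝ) :
    M.charpoly.eval r = (r • (1 : Matrix (Fin n) (Fin n) ℝ) - M).det := by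
  rw [Matrix.charpoly, _root_.eval_det, Matrix.matPolyEquiv_charmatrix, ← my_scalar_eq_smul_one]
  simp

/-- Every element of a horospherical subgroup is unipotent: if
`g⁻ᵏ u gᵏ → 1` as `k → +∞`, then `u - 1` is nilpotent, i.e. `(u - 1)ⁿ = 0`. -/
theorem horospherical_element_unipotent (n : ℕ) (g u : SL(n, ℝ))
    (h : Tendsto (fun k : ℕ => g⁻¹ ^ k * u * g ^ k) atTop (𝓝 (1 : SL(n, ℝ)))) :
    ((u : Matrix (Fin n) (Fin n) ℝ) - 1) ^ n = 0 := by
  -- Step 1: the "shifted determinant" is constant along the conjugation orbit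
  have hconj : ∀ (k : ℕ) (t : ℝ),
      (t • (1 : Matrix (Fin n) (Fin n) ℝ)
          - ((g⁻¹ ^ k * u * g ^ k : SL(n, ℝ)) : Matrix (Fin n) (Fin n) ℝ)).det
        = (t • (1 : Matrix (Fin n) (Fin n) ℝ) - (u : Matrix (Fin n) (Fin n) ℝ)).det := by
    intro k t
    set A : Matrix (Fin n) (Fin n) ℝ := ((g ^ k : SL(n, ℝ)) : Matrix (Fin n) (Fin n) ℝ) with hA
    set B : Matrix (Fin n) (Fin n) ℝ := ((g⁻¹ ^ k : SL(n, ℝ)) : Matrix (Fin n) (Fin n) ℝ) with hB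
    have h1 : (g⁻¹ ^ k * g ^ k : SL(n, ℝ)) = 1 := by group
    have hBA : B * A = 1 := by
      rw [hA, hB, ← Matrix.SpecialLinearGroup.coe_mul, h1,
        Matrix.SpecialLinearGroup.coe_one]
    have hc : ((g⁻¹ ^ k * u * g ^ k : SL(n, ℝ)) : Matrix (Fin n) (Fin n) ℝ)
        = B * (u : Matrix (Fin n) (Fin n) ℝ) * A := by
      rw [hA, hB, ← Matrix.SpecialLinearGroup.coe_mul, ← Matrix.SpecialLinearGroup.coe_mul]
    have hsub : t • (1 : Matrix (Fin n) (Fin n) ℝ) - B * (u : Matrix (Fin n) (Fin n) ℝ) * A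
        = B * (t • (1 : Matrix (Fin n) (Fin n) ℝ) - (u : Matrix (Fin n) (Fin n) ℝ)) * A := by
      rw [Matrix.mul_sub, Matrix.sub_mul]
      congr 1
      rw [Matrix.mul_smul, mul_one, Matrix.smul_mul, hBA]
    rw [hc, hsub, Matrix.det_mul, Matrix.det_mul,
      Matrix.SpecialLinearGroup.det_coe, Matrix.SpecialLinearGroup.det_coe]
    ring
  -- Step 2: by continuity, the shifted determinant of u equals that of 1
  have hdet : ∀ t : ℝ,
      (t • (1 : Matrix (Fin n) (Fin n) ℝ) - (u : Matrix (Fin n) (Fin n) ℝ)).det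
        = (t - 1) ^ n := by
    intro t
    have hcont : Continuous fun v : SL(n, ℝ) =>
        (t • (1 : Matrix (Fin n) (Fin n) ℝ) - (v : Matrix (Fin n) (Fin n) ℝ)).det := by
      have hcoe : Continuous fun v : SL(n, ℝ) => (v : Matrix (Fin n) (Fin n) ℝ) :=
        continuous_subtype_val
      exact (continuous_const.sub hcoe).matrix_det
    have hlim : Tendsto
        (fun k : ℕ => (t • (1 : Matrix (Fin n) (Fin n) ℝ)
          - ((g⁻¹ ^ k * u * g ^ k : SL(n, ℝ)) : Matrix (Fin n) (Fin n) ℝ)).det) atTop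
        (𝓝 ((t • (1 : Matrix (Fin n) (Fin n) ℝ)
          - ((1 : SL(n, ℝ)) : Matrix (Fin n) (Fin n) ℝ)).det)) :=
      (hcont.tendsto _).comp h
    have hconst : (fun k : ℕ => (t • (1 : Matrix (Fin n) (Fin n) ℝ)
          - ((g⁻¹ ^ k * u * g ^ k : SL(n, ℝ)) : Matrix (Fin n) (Fin n) ℝ)).det)
        = fun _ : ℕ => (t • (1 : Matrix (Fin n) (Fin n) ℝ)
          - (u : Matrix (Fin n) (Fin n) ℝ)).det := funext fun k => hconj k t
    rw [hconst] at hlim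
    have := tendsto_nhds_unique hlim tendsto_const_nhds
    rw [← this, Matrix.SpecialLinearGroup.coe_one]
    have : t • (1 : Matrix (Fin n) (Fin n) ℝ) - 1 = (t - 1) • (1 : Matrix (Fin n) (Fin n) ℝ) := by
      rw [sub_smul, one_smul]
    rw [this, Matrix.det_smul, Matrix.det_one, mul_one, Fintype.card_fin]
  -- Step 3: hence the characteristic polynomial of u is (X - 1)^n
  have hcp : (u : Matrix (Fin n) (Fin n) ℝ).charpoly = (Polynomial.X - Polynomial.C 1) ^ n := by
    apply Polynomial.funext
    intro t
    rw [my_eval_charpoly, hdet]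
    simp
  -- Step 4: Cayley–Hamilton
  have := Matrix.aeval_self_charpoly (u : Matrix (Fin n) (Fin n) ℝ)
  rw [hcp] at this
  simpa using this
end
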